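/- Fix an integer $N \geq 2$. Define for $a > 0$ and $x \geq 0$: $f(x) = \sum_{j=1}^{N} \frac{1}{[1 + a^2 - 2a\cos(\frac{2j-1}{N}\pi) + x]^{3/2}} - \sum_{j=1}^{N} \frac{1}{[1 + a^2 - 2a\cos(\frac{2j}{N}\pi) + x]^{3/2}}$. Then $f(x) < 0$ for all $x \in [0,\infty)$, except at the singular point where $a = 1$ and $x = 0$ (where a denominator vanishes). -/

import Mathlib

open Real Finset

noncomputable def bb : ℕ → ℝ := fun n => ∏ i ∈ Finset.range n, ((i : ℝ) + 3/2)/((i : ℝ)+1)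

lemma bb_zero : bb 0 = 1 := by simp [bb]

lemma bb_succ (n : ℕ) : bb (n+1) = bb n * (((n:ℝ) + 3/2)/((n:ℝ)+1)) := by
  simp only [bb, Finset.prod_range_succ]

lemma bb_pos (n : ℕ) : 0 < bb n := by
  apply Finset.prod_pos
  intro i _
  positivity

lemma bb_le (n : ℕ) : bb n ≤ (n : ℝ) + 1 := by
  induction n with
  | zero => simp [bb_zero]
  | succ n ih =>
    rw [bb_succ]
    have h1 : (0:ℝ) < (n:ℝ) + 1 := by positivity
    have h2 : ((n:ℝ) + 3/2)/((n:ℝ)+1) ≤ ((n:ℝ)+2)/((n:ℝ)+1) := by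
      gcongr
      linarith
    have h3 : 0 ≤ ((n:ℝ) + 3/2)/((n:ℝ)+1) := by positivity
    calc bb n * (((n:ℝ) + 3/2)/((n:ℝ)+1)) ≤ ((n:ℝ)+1) * (((n:ℝ)+2)/((n:ℝ)+1)) := by
          apply mul_le_mul ih h2 h3 (by positivity)
      _ = (n:ℝ) + 2 := by field_simp
      _ = ((n:ℕ) + 1 : ℕ) + 1 := by push_cast; ring

lemma bb_summable {r : ℝ} (hr : |r| < 1) : Summable (fun n => bb n * r ^ n) := by
  have h1 : Summable (fun n : ℕ => ((n:ℝ)+1) * |r| ^ n) := by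
    have := summable_pow_mul_geometric_of_norm_lt_one 1 (by rwa [Real.norm_eq_abs, abs_abs] : ‖|r|‖ < 1)
    have h2 : Summable (fun n : ℕ => |r| ^ n) := summable_geometric_of_lt_one (abs_nonneg r) hr
    simpa [add_mul, pow_one] using this.add h2
  apply Summable.of_norm
  apply Summable.of_nonneg_of_le (fun n => norm_nonneg _) _ h1
  intro n
  rw [norm_mul, Real.norm_eq_abs, Real.norm_eq_abs, abs_of_pos (bb_pos n), abs_pow]
  exact mul_le_mul (bb_le n) le_rfl (by positivity) (by positivity)

lemma bb_deriv_summable {r : ℝ} (hr : 0 ≤ r) (hr1 : r < 1) :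
    Summable (fun n : ℕ => ((n:ℝ)+1) * ((n:ℝ) * r ^ (n-1))) := by
  rw [← summable_nat_add_iff 1]
  have h : ∀ n : ℕ, ((((n:ℕ)+1:ℕ):ℝ)+1) * ((((n:ℕ)+1:ℕ):ℝ) * r ^ ((n+1)-1))
      = ((n:ℝ)^2 * r^n + 3*((n:ℝ) * r^n)) + 2*r^n := by
    intro n
    push_cast [Nat.add_sub_cancel]
    ring
  simp only [h]
  have h1 : Summable (fun n : ℕ => (n:ℝ)^2 * r^n) := by
    simpa using summable_pow_mul_geometric_of_norm_lt_one 2 (by rwa [Real.norm_eq_abs, abs_of_nonneg hr])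
  have h2 : Summable (fun n : ℕ => (n:ℝ) * r^n) := by
    simpa using summable_pow_mul_geometric_of_norm_lt_one 1 (by rwa [Real.norm_eq_abs, abs_of_nonneg hr])
  have h3 : Summable (fun n : ℕ => r^n) := summable_geometric_of_lt_one hr hr1
  exact (h1.add (h2.mul_left 3)).add (h3.mul_left 2)

lemma bb_hasSum {u : ℝ} (hu : |u| < 1) :
    HasSum (fun n => bb n * u ^ n) ((1-u) ^ (-(3:ℝ)/2)) := by
  set r : ℝ := (|u|+1)/2 with hr_def
  have hur : |u| < r := by rw [hr_def]; linarith
  have hr0 : 0 ≤ r := by positivity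
  have hr1 : r < 1 := by rw [hr_def]; linarith
  set F : ℝ → ℝ := fun y => ∑' n, bb n * y ^ n with hF_def
  -- derivative of F on the ball
  have hderivF : ∀ y ∈ Metric.ball (0:ℝ) r,
      HasDerivAt F (∑' n, bb n * ((n:ℝ) * y ^ (n-1))) y := by
    intro y hy
    have hg : ∀ (n : ℕ) (z : ℝ), z ∈ Metric.ball (0:ℝ) r →
        HasDerivAt (fun w => bb n * w ^ n) (bb n * ((n:ℝ) * z ^ (n-1))) z := by
      intro n z _
      exact (hasDerivAt_pow n z).const_mul (bb n)
    have hg' : ∀ (n : ℕ) (z : ℝ), z ∈ Metric.ball (0:ℝ) r →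
        ‖bb n * ((n:ℝ) * z ^ (n-1))‖ ≤ ((n:ℝ)+1) * ((n:ℝ) * r ^ (n-1)) := by
      intro n z hz
      rw [mem_ball_zero_iff, Real.norm_eq_abs] at hz
      have h2 : |(n:ℝ) * z ^ (n-1)| ≤ (n:ℝ) * r ^ (n-1) := by
        rw [abs_mul, abs_pow, Nat.abs_cast]
        gcongr
      rw [Real.norm_eq_abs, abs_mul]
      apply mul_le_mul _ h2 (abs_nonneg _) (by positivity)
      rw [abs_of_pos (bb_pos n)]; exact bb_le n
    have h0mem : (0:ℝ) ∈ Metric.ball (0:ℝ) r := by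
      rw [mem_ball_zero_iff, norm_zero]; linarith [hur, abs_nonneg u]
    have h0sum : Summable fun n => bb n * (0:ℝ) ^ n :=
      bb_summable (by rw [abs_zero]; linarith [hur, abs_nonneg u])
    exact hasDerivAt_tsum_of_isPreconnected (bb_deriv_summable hr0 hr1)
      Metric.isOpen_ball (Convex.isPreconnected (convex_ball 0 r)) hg hg' h0mem h0sum hy
  have hFsum : ∀ y : ℝ, |y| < 1 → HasSum (fun n => bb n * y ^ n) (F y) :=
    fun y hy => (bb_summable hy).hasSum
  -- key ODE identity
  have key : ∀ y ∈ Metric.ball (0:ℝ) r,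
      (1-y) * (∑' n, bb n * ((n:ℝ) * y ^ (n-1))) = 3/2 * F y := by
    intro y hy
    rw [mem_ball_zero_iff, Real.norm_eq_abs] at hy
    have hy1 : |y| < 1 := hy.trans hr1
    have hD : Summable (fun n => bb n * ((n:ℝ) * y ^ (n-1))) := by
      apply Summable.of_norm
      apply Summable.of_nonneg_of_le (fun n => norm_nonneg _) _ (bb_deriv_summable hr0 hr1)
      intro n
      have h2 : |(n:ℝ) * y ^ (n-1)| ≤ (n:ℝ) * r ^ (n-1) := by
        rw [abs_mul, abs_pow, Nat.abs_cast]
        gcongr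
      rw [Real.norm_eq_abs, abs_mul]
      apply mul_le_mul _ h2 (abs_nonneg _) (by positivity)
      rw [abs_of_pos (bb_pos n)]; exact bb_le n
    set D := ∑' n, bb n * ((n:ℝ) * y ^ (n-1)) with hD_def
    have h1 : HasSum (fun n => bb n * ((n:ℝ) * y ^ (n-1))) D := hD.hasSum
    have h2 : HasSum (fun n : ℕ => bb (n+1) * (((n+1 : ℕ):ℝ) * y ^ n)) D := by
      apply (hasSum_nat_add_iff (f := fun n => bb n * ((n:ℝ) * y ^ (n-1))) 1).2
      simpa using h1
    have h2' : HasSum (fun n => bb n * (((n:ℝ) + 3/2) * y ^ n)) D := by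
      have e : (fun n : ℕ => bb (n+1) * (((n+1 : ℕ):ℝ) * y ^ n))
          = fun n => bb n * (((n:ℝ) + 3/2) * y ^ n) := by
        funext n
        rw [bb_succ]
        have hne : ((n:ℝ)+1) ≠ 0 := by positivity
        push_cast
        field_simp
      exact e ▸ h2
    have h3 : HasSum (fun n => bb n * ((n:ℝ) * y ^ n)) (D * y) := by
      have h3' := h1.mul_right y
      have e : (fun n : ℕ => bb n * ((n:ℝ) * y ^ (n-1)) * y)
          = fun n => bb n * ((n:ℝ) * y ^ n) := by
        funext n
        cases n with
        | zero => simp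
        | succ m =>
          have : (m + 1 : ℕ) - 1 = m := rfl
          rw [this]
          push_cast
          ring
      exact e ▸ h3'
    have h4 := h2'.sub h3
    have h5 : HasSum (fun n => (3/2 : ℝ) * (bb n * y ^ n)) (D - D * y) := by
      have e : (fun n : ℕ => bb n * (((n:ℝ) + 3/2) * y ^ n) - bb n * ((n:ℝ) * y ^ n))
          = fun n => (3/2 : ℝ) * (bb n * y ^ n) := by
        funext n; ring
      exact e ▸ h4
    have h6 := (hFsum y hy1).mul_left (3/2)
    have h7 := h5.unique h6
    ring_nf
    ring_nf at h7
    linarith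
  -- G is constant
  set G : ℝ → ℝ := fun y => (1-y) ^ ((3:ℝ)/2) * F y with hG_def
  have hG : ∀ y ∈ Metric.ball (0:ℝ) r, HasDerivAt G 0 y := by
    intro y hy
    have hmem := hy
    rw [mem_ball_zero_iff, Real.norm_eq_abs] at hmem
    have h1y : 0 < 1 - y := by
      have := abs_lt.1 (hmem.trans hr1); linarith
    have h0 : HasDerivAt (fun w : ℝ => 1 - w) (-1) y := (hasDerivAt_id y).const_sub 1
    have h1 : HasDerivAt (fun t : ℝ => t ^ ((3:ℝ)/2))
        ((3:ℝ)/2 * (1-y) ^ ((3:ℝ)/2 - 1)) (1-y) :=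
      Real.hasDerivAt_rpow_const (Or.inl h1y.ne')
    have hA : HasDerivAt (fun w : ℝ => (1-w) ^ ((3:ℝ)/2))
        (-(3/2 * (1-y) ^ ((1:ℝ)/2))) y := by
      have hc := h1.comp y h0
      refine hc.congr_deriv ?_
      rw [show (3:ℝ)/2 - 1 = 1/2 by norm_num]; ring
    have hB := hderivF y hy
    have hAB := hA.mul hB
    have e32 : (1-y) ^ ((3:ℝ)/2) = (1-y) ^ ((1:ℝ)/2) * (1-y) := by
      rw [show (3:ℝ)/2 = 1/2 + 1 by norm_num, Real.rpow_add h1y, Real.rpow_one]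
    have efin : (1-y) ^ ((3:ℝ)/2) * (∑' n, bb n * ((n:ℝ) * y ^ (n-1)))
        = (1-y) ^ ((1:ℝ)/2) * (3/2 * F y) := by
      rw [e32, mul_assoc, key y hy]
    refine hAB.congr_deriv ?_
    rw [efin]
    ring
  -- constancy along the segment from 0 to u
  have hmemIcc : ∀ z : ℝ, |z| ≤ |u| → z ∈ Metric.ball (0:ℝ) r := by
    intro z hz
    rw [mem_ball_zero_iff, Real.norm_eq_abs]
    exact lt_of_le_of_lt hz hur
  have hGu : G u = G 0 := by
    rcases le_or_gt 0 u with hu0 | hu0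
    · have hcont : ContinuousOn G (Set.Icc 0 u) := by
        intro z hz
        have hzmem : z ∈ Metric.ball (0:ℝ) r := by
          apply hmemIcc
          rw [abs_of_nonneg hz.1, abs_of_nonneg hu0]
          exact hz.2
        exact (hG z hzmem).continuousAt.continuousWithinAt
      have hder : ∀ z ∈ Set.Ico 0 u, HasDerivWithinAt G 0 (Set.Ici z) z := by
        intro z hz
        have hzmem : z ∈ Metric.ball (0:ℝ) r := by
          apply hmemIcc
          rw [abs_of_nonneg hz.1, abs_of_nonneg hu0]
          exact hz.2.le
        exact (hG z hzmem).hasDerivWithinAt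
      exact constant_of_has_deriv_right_zero hcont hder u (Set.mem_Icc.2 ⟨hu0, le_rfl⟩)
    · have hcont : ContinuousOn G (Set.Icc u 0) := by
        intro z hz
        have hzmem : z ∈ Metric.ball (0:ℝ) r := by
          apply hmemIcc
          rw [abs_of_nonpos hz.2, abs_of_neg hu0]
          linarith [hz.1]
        exact (hG z hzmem).continuousAt.continuousWithinAt
      have hder : ∀ z ∈ Set.Ico u 0, HasDerivWithinAt G 0 (Set.Ici z) z := by
        intro z hz
        have hzmem : z ∈ Metric.ball (0:ℝ) r := by
          apply hmemIcc
          rw [abs_of_nonpos hz.2.le, abs_of_neg hu0]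
          linarith [hz.1]
        exact (hG z hzmem).hasDerivWithinAt
      exact (constant_of_has_deriv_right_zero hcont hder 0 (Set.mem_Icc.2 ⟨hu0.le, le_rfl⟩)).symm
  have hF0 : F 0 = 1 := by
    have : F 0 = ∑' n, bb n * (0:ℝ) ^ n := rfl
    rw [this, tsum_eq_single 0]
    · simp [bb_zero]
    · intro n hn
      simp [zero_pow hn]
  have hG0 : G 0 = 1 := by
    rw [hG_def]
    simp [hF0]
  have h1u : 0 < 1 - u := by
    have := abs_lt.1 hu; linarith
  have hkey : (1-u) ^ ((3:ℝ)/2) * F u = 1 := by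
    have : G u = 1 := hGu.trans hG0
    rwa [hG_def] at this
  have hFu : F u = (1-u) ^ (-(3:ℝ)/2) := by
    have hpos : (0:ℝ) < (1-u) ^ ((3:ℝ)/2) := Real.rpow_pos_of_pos h1u _
    rw [show (-(3:ℝ)/2) = -((3:ℝ)/2) by norm_num, Real.rpow_neg h1u.le]
    field_simp
    linarith [hkey]
  have hres := hFsum u hu
  rwa [hFu] at hres

lemma cos_pow (θ : ℝ) (n : ℕ) :
    (2 * Real.cos θ) ^ n
      = ∑ i ∈ Finset.range (n+1), (n.choose i : ℝ) * Real.cos ((2*(i:ℝ) - n) * θ) := by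
  have key : ((2:ℂ) * Complex.cos θ) ^ n
      = ∑ i ∈ Finset.range (n+1),
          (n.choose i : ℂ) * Complex.exp ((((2*(i:ℝ) - n) * θ : ℝ) : ℂ) * Complex.I) := by
    have h2c : (2:ℂ) * Complex.cos θ
        = Complex.exp (θ*Complex.I) + Complex.exp (-θ*Complex.I) := by
      rw [Complex.cos]
      ring
    rw [h2c, add_pow]
    apply Finset.sum_congr rfl
    intro i hi
    rw [Finset.mem_range] at hi
    have hin : i ≤ n := Nat.lt_succ_iff.mp hi
    rw [← Complex.exp_nat_mul, ← Complex.exp_nat_mul, ← Complex.exp_add, mul_comm]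
    congr 1
    have hcast : ((n - i : ℕ) : ℂ) = (n : ℂ) - i := by
      push_cast [hin]
      ring
    rw [hcast]
    push_cast
    ring
  have hre := congrArg Complex.re key
  have hL : (2:ℂ) * Complex.cos θ = ((2 * Real.cos θ : ℝ) : ℂ) := by
    push_cast [Complex.ofReal_cos]
    ring
  rw [hL, ← Complex.ofReal_pow, Complex.ofReal_re, Complex.re_sum] at hre
  rw [hre]
  apply Finset.sum_congr rfl
  intro i _
  rw [show ((n.choose i : ℂ)) = (((n.choose i : ℝ)) : ℂ) by push_cast; ring,
    Complex.re_ofReal_mul, Complex.exp_ofReal_mul_I_re]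

noncomputable def QQ (N : ℕ) (m : ℤ) : ℝ :=
  ∑ j ∈ Finset.Icc 1 N,
    (Real.cos ((m:ℝ) * (2*(j:ℝ)*π/N)) - Real.cos ((m:ℝ) * ((2*(j:ℝ)-1)*π/N)))

lemma qq_N {N : ℕ} (hN : 1 ≤ N) : QQ N N = 2*N := by
  have hN0 : (N:ℝ) ≠ 0 := Nat.cast_ne_zero.2 (by omega)
  have h : ∀ j ∈ Finset.Icc 1 N,
      (Real.cos (((N:ℤ):ℝ) * (2*(j:ℝ)*π/N)) - Real.cos (((N:ℤ):ℝ) * ((2*(j:ℝ)-1)*π/N)))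
      = 2 := by
    intro j _
    have e1 : ((N:ℤ):ℝ) * (2*(j:ℝ)*π/N) = (j:ℝ) * (2*π) := by
      push_cast
      field_simp
    have e2 : ((N:ℤ):ℝ) * ((2*(j:ℝ)-1)*π/N) = (j:ℝ) * (2*π) - π := by
      push_cast
      field_simp
    rw [e1, e2, Real.cos_nat_mul_two_pi, Real.cos_sub_pi, Real.cos_nat_mul_two_pi]
    norm_num
  rw [QQ, Finset.sum_congr rfl h, Finset.sum_const, Nat.card_Icc]
  simp
  ring

lemma qq_nonneg {N : ℕ} (hN : 1 ≤ N) (m : ℤ) : 0 ≤ QQ N m := by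
  have hN0 : (N:ℝ) ≠ 0 := Nat.cast_ne_zero.2 (by omega)
  rcases em ((N:ℤ) ∣ m) with ⟨r, hr⟩ | hndvd
  · -- divisible case: first cosine is 1, second is ≤ 1
    apply Finset.sum_nonneg
    intro j _
    have e1 : (m:ℝ) * (2*(j:ℝ)*π/N) = ((r * j : ℤ) : ℝ) * (2*π) := by
      rw [hr]
      push_cast
      field_simp
    rw [e1, Real.cos_int_mul_two_pi]
    linarith [Real.cos_le_one ((m:ℝ) * ((2*(j:ℝ)-1)*π/N))]
  · -- non-divisible: the sum is zero
    set ζ : ℂ := Complex.exp ((2*π*(m:ℝ)/N : ℝ) * Complex.I) with hζ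
    set μ : ℂ := Complex.exp ((-(π*(m:ℝ)/N) : ℝ) * Complex.I) with hμ
    have hNc : (N:ℂ) ≠ 0 := Nat.cast_ne_zero.2 (by omega)
    have hζN : ζ ^ N = 1 := by
      rw [hζ, ← Complex.exp_nat_mul]
      have : (N:ℂ) * (((2*π*(m:ℝ)/N : ℝ) : ℂ) * Complex.I) = (m:ℂ) * (2*π*Complex.I) := by
        push_cast
        field_simp
      rw [this, Complex.exp_int_mul_two_pi_mul_I]
    have hζ1 : ζ ≠ 1 := by
      intro h
      rw [hζ, Complex.exp_eq_one_iff] at h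
      obtain ⟨k, hk⟩ := h
      apply hndvd
      refine ⟨k, ?_⟩
      have hk2 : (k:ℂ) * (2 * ↑π * Complex.I) = (((k:ℝ) * (2*π) : ℝ) : ℂ) * Complex.I := by
        push_cast
        ring
      rw [hk2] at hk
      have h1 := congrArg Complex.im hk
      rw [Complex.mul_I_im, Complex.mul_I_im, Complex.ofReal_re, Complex.ofReal_re] at h1
      -- h1 : 2*π*m/N = k*(2*π)  in ℝ
      have h2 : 2*π*(m:ℝ) = 2*π*((k:ℝ)*N) := by
        have h1' : 2*π*(m:ℝ)/N * N = ((k:ℝ)*(2*π)) * N := by rw [h1]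
        rw [div_mul_cancel₀ _ hN0] at h1'
        linear_combination h1'
      have h3 : (m:ℝ) = (k:ℝ)*(N:ℝ) :=
        mul_left_cancel₀ (by positivity : (2*π:ℝ) ≠ 0) h2
      have h4 : (m:ℝ) = ((N * k : ℤ) : ℝ) := by push_cast; linarith [h3]
      exact_mod_cast h4
    have hgeom : ∑ j ∈ Finset.Icc 1 N, ζ ^ j = 0 := by
      have : Finset.Icc 1 N = Finset.Ico 1 (N+1) := by
        rw [Finset.Ico_add_one_right_eq_Icc]
      rw [this, geom_sum_Ico hζ1 (by omega)]
      rw [pow_succ, hζN]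
      simp
    have hterm : ∀ j ∈ Finset.Icc 1 N,
        (Complex.exp ((((m:ℝ) * (2*(j:ℝ)*π/N) : ℝ)) * Complex.I)
          - Complex.exp ((((m:ℝ) * ((2*(j:ℝ)-1)*π/N) : ℝ)) * Complex.I))
        = (1 - μ) * ζ ^ j := by
      intro j _
      have e1 : Complex.exp ((((m:ℝ) * (2*(j:ℝ)*π/N) : ℝ)) * Complex.I) = ζ ^ j := by
        rw [hζ, ← Complex.exp_nat_mul]
        congr 1
        push_cast
        ring
      have e2 : Complex.exp ((((m:ℝ) * ((2*(j:ℝ)-1)*π/N) : ℝ)) * Complex.I) = μ * ζ ^ j := by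
        rw [hζ, hμ, ← Complex.exp_nat_mul, ← Complex.exp_add]
        congr 1
        push_cast
        ring
      rw [e1, e2]
      ring
    have hzero : QQ N m = 0 := by
      have hre : QQ N m = (∑ j ∈ Finset.Icc 1 N,
          (Complex.exp ((((m:ℝ) * (2*(j:ℝ)*π/N) : ℝ)) * Complex.I)
            - Complex.exp ((((m:ℝ) * ((2*(j:ℝ)-1)*π/N) : ℝ)) * Complex.I))).re := by
        rw [Complex.re_sum, QQ]
        apply Finset.sum_congr rfl
        intro j _
        rw [Complex.sub_re, Complex.exp_ofReal_mul_I_re, Complex.exp_ofReal_mul_I_re]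
      rw [hre, Finset.sum_congr rfl hterm, ← Finset.mul_sum, hgeom, mul_zero, Complex.zero_re]
    rw [hzero]

theorem stmt6 (N : ℕ) (hN : 2 ≤ N) (a : ℝ) (ha : 0 < a)
    (x : ℝ) (hx : 0 ≤ x) (hsing : ¬ (a = 1 ∧ x = 0)) :
    ∑ j ∈ Finset.Icc 1 N,
        (1 + a ^ 2 - 2 * a * Real.cos ((2 * j - 1) * π / N) + x) ^ (-(3:ℝ)/2)
      - ∑ j ∈ Finset.Icc 1 N,
        (1 + a ^ 2 - 2 * a * Real.cos ((2 * j) * π / N) + x) ^ (-(3:ℝ)/2)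
      < 0 := by
  have hN1 : 1 ≤ N := by omega
  set A : ℝ := 1 + a^2 + x with hA_def
  set B : ℝ := 2*a with hB_def
  have hBpos : 0 < B := by rw [hB_def]; linarith
  have hAB : B < A := by
    rw [hA_def, hB_def]
    rcases (not_and_or.1 hsing) with h | h
    · have h2 : 0 < (a-1)*(a-1) := mul_self_pos.2 (sub_ne_zero.2 h)
      nlinarith
    · have hx0 : 0 < x := lt_of_le_of_ne hx (Ne.symm h)
      nlinarith [sq_nonneg (a-1)]
  have hApos : 0 < A := hBpos.trans hAB
  set t : ℝ := B / A with ht_def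
  have ht0 : 0 < t := div_pos hBpos hApos
  have ht1 : t < 1 := (div_lt_one hApos).2 hAB
  -- per-angle expansion
  have hterm : ∀ θ : ℝ, HasSum (fun n => A ^ (-(3:ℝ)/2) * (bb n * (t * Real.cos θ)^n))
      ((1 + a ^ 2 - 2 * a * Real.cos θ + x) ^ (-(3:ℝ)/2)) := by
    intro θ
    have hu : |t * Real.cos θ| < 1 := by
      rw [abs_mul, abs_of_pos ht0]
      calc t * |Real.cos θ| ≤ t * 1 := by
            gcongr
            exact Real.abs_cos_le_one θ
        _ < 1 := by linarith
    have h1 := (bb_hasSum hu).mul_left (A ^ (-(3:ℝ)/2))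
    have hpos1 : 0 < 1 - t * Real.cos θ := by
      have := (abs_lt.1 hu).2
      linarith
    have hbase : 1 + a ^ 2 - 2 * a * Real.cos θ + x = A * (1 - t * Real.cos θ) := by
      rw [ht_def, hA_def, hB_def]
      field_simp
      ring
    rw [hbase, Real.mul_rpow hApos.le hpos1.le]
    exact h1
  -- sums over j
  have hodd := hasSum_sum (fun j (_ : j ∈ Finset.Icc 1 N) =>
    hterm ((2 * (j:ℝ) - 1) * π / N))
  have heven := hasSum_sum (fun j (_ : j ∈ Finset.Icc 1 N) =>
    hterm ((2 * (j:ℝ)) * π / N))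
  have hdiff := heven.sub hodd
  -- P n
  set P : ℕ → ℝ := fun n => ∑ j ∈ Finset.Icc 1 N,
      (Real.cos (2*(j:ℝ)*π/N) ^ n - Real.cos ((2*(j:ℝ)-1)*π/N) ^ n) with hP_def
  have hdiff' : HasSum (fun n => A ^ (-(3:ℝ)/2) * bb n * t^n * P n)
      ((∑ j ∈ Finset.Icc 1 N,
        (1 + a ^ 2 - 2 * a * Real.cos ((2 * j) * π / N) + x) ^ (-(3:ℝ)/2))
      - ∑ j ∈ Finset.Icc 1 N,
        (1 + a ^ 2 - 2 * a * Real.cos ((2 * j - 1) * π / N) + x) ^ (-(3:ℝ)/2)) := by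
    have e : (fun n => A ^ (-(3:ℝ)/2) * bb n * t^n * P n)
        = fun n => (∑ j ∈ Finset.Icc 1 N, A ^ (-(3:ℝ)/2) * (bb n * (t * Real.cos ((2 * (j:ℝ)) * π / N))^n))
          - ∑ j ∈ Finset.Icc 1 N, A ^ (-(3:ℝ)/2) * (bb n * (t * Real.cos ((2 * (j:ℝ) - 1) * π / N))^n) := by
      funext n
      rw [← Finset.sum_sub_distrib, hP_def, Finset.mul_sum]
      apply Finset.sum_congr rfl
      intro j _
      rw [mul_pow, mul_pow]
      ring_nf
    rw [e]
    exact hdiff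
  -- positivity of P
  have hPformula : ∀ n : ℕ, P n * 2^n
      = ∑ i ∈ Finset.range (n+1), (n.choose i : ℝ) * QQ N (2*i - n) := by
    intro n
    rw [hP_def, Finset.sum_mul]
    have e : ∀ j ∈ Finset.Icc 1 N,
        (Real.cos (2*(j:ℝ)*π/N) ^ n - Real.cos ((2*(j:ℝ)-1)*π/N) ^ n) * 2^n
        = ∑ i ∈ Finset.range (n+1), (n.choose i : ℝ) *
            (Real.cos (((2*(i:ℤ)-n : ℤ):ℝ) * (2*(j:ℝ)*π/N))
              - Real.cos (((2*(i:ℤ)-n : ℤ):ℝ) * ((2*(j:ℝ)-1)*π/N))) := by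
      intro j _
      have c1 := cos_pow (2*(j:ℝ)*π/N) n
      have c2 := cos_pow ((2*(j:ℝ)-1)*π/N) n
      rw [mul_pow] at c1 c2
      have : (Real.cos (2*(j:ℝ)*π/N) ^ n - Real.cos ((2*(j:ℝ)-1)*π/N) ^ n) * 2^n
          = 2^n * Real.cos (2*(j:ℝ)*π/N) ^ n - 2^n * Real.cos ((2*(j:ℝ)-1)*π/N) ^ n := by ring
      rw [this, c1, c2, ← Finset.sum_sub_distrib]
      apply Finset.sum_congr rfl
      intro i _
      have ecast : ((2*(i:ℤ)-n : ℤ):ℝ) = 2*(i:ℝ) - n := by push_cast; ring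
      rw [ecast]
      ring
    rw [Finset.sum_congr rfl e, Finset.sum_comm]
    apply Finset.sum_congr rfl
    intro i _
    rw [QQ, Finset.mul_sum]
  have hPnonneg : ∀ n : ℕ, 0 ≤ P n := by
    intro n
    have h2 : (0:ℝ) < 2^n := by positivity
    have hS : 0 ≤ P n * 2^n := by
      rw [hPformula n]
      apply Finset.sum_nonneg
      intro i _
      exact mul_nonneg (by positivity) (qq_nonneg hN1 (2*i - n))
    nlinarith [hS]
  have hPN : 0 < P N := by
    have h2 : (0:ℝ) < 2^N := by positivity
    have hform := hPformula N
    have hsingle : (N.choose N : ℝ) * QQ N (2*(N:ℤ) - N)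
        ≤ ∑ i ∈ Finset.range (N+1), (N.choose i : ℝ) * QQ N (2*(i:ℤ) - N) := by
      refine Finset.single_le_sum (f := fun i => (N.choose i : ℝ) * QQ N (2*(i:ℤ) - N)) ?_ ?_
      · intro i _
        exact mul_nonneg (by positivity) (qq_nonneg hN1 (2*i - N))
      · exact Finset.self_mem_range_succ N
    rw [Nat.choose_self] at hsingle
    have hQN : QQ N (2*(N:ℤ) - N) = 2*N := by
      rw [show (2*(N:ℤ) - N) = (N:ℤ) by ring]
      exact qq_N hN1
    rw [hQN] at hsingle
    push_cast at hsingle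
    have hNpos : (0:ℝ) < N := Nat.cast_pos.2 (by omega)
    nlinarith [hsingle, hform, h2, hNpos]
  -- conclude
  have hposterm : 0 < A ^ (-(3:ℝ)/2) * bb N * t^N * P N := by
    have := Real.rpow_pos_of_pos hApos (-(3:ℝ)/2)
    have := bb_pos N
    positivity
  have hge := le_hasSum hdiff' N (fun j _ => by
    have := bb_pos j
    have := Real.rpow_pos_of_pos hApos (-(3:ℝ)/2)
    have := hPnonneg j
    positivity)
  linarith
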